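/- Every graph G with maximum degree Δ has strong separation dimension at most the separation dimension of G plus 2Δ + 2. -/
import Mathlib


/-- Disjoint edges `vw` and `xy` are separated in the ordering given by an injective
function `f` if all endpoints of one precede all endpoints of the other. -/
def Separates {V : Type*} (f : V → ℕ) (v w x y : V) : Prop :=
  (f v < f x ∧ f v < f y ∧ f w < f x ∧ f w < f y) ∨
  (f x < f v ∧ f x < f w ∧ f y < f v ∧ f y < f w)

/-- `f` is a separating representation of `G`: a family of linear orderings of `V(G)`
(injective functions to `ℕ`) such that every pair of disjoint edges is separated in
some ordering. -/
def IsSepRep {V : Type*} (G : SimpleGraph V) {k : ℕ} (f : Fin k → V → ℕ) : Prop :=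
  (∀ i, Function.Injective (f i)) ∧
  ∀ ⦃v w x y : V⦄, G.Adj v w → G.Adj x y → v ≠ x → v ≠ y → w ≠ x → w ≠ y →
    ∃ i, Separates (f i) v w x y

/-- `f` is a strongly separating representation of `G`: separating, and in addition for
every edge `vw` and vertex `x ∉ {v,w}` some ordering has `x` before both `v,w` and some
ordering has `x` after both `v,w`. -/
def IsStrongSepRep {V : Type*} (G : SimpleGraph V) {k : ℕ} (f : Fin k → V → ℕ) : Prop :=
  IsSepRep G f ∧
  ∀ ⦃v w x : V⦄, G.Adj v w → x ≠ v → x ≠ w →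
    (∃ i, f i x < f i v ∧ f i x < f i w) ∧ (∃ j, f j v < f j x ∧ f j w < f j x)

/-- The separation dimension of `G`: the minimum size of a (nonempty) separating
representation of `G`. -/
noncomputable def sepDim {V : Type*} (G : SimpleGraph V) : ℕ :=
  sInf {k | 1 ≤ k ∧ ∃ f : Fin k → V → ℕ, IsSepRep G f}

/-- The strong separation dimension of `G`: the minimum size of a (nonempty) strongly
separating representation of `G`. -/
noncomputable def strongSepDim {V : Type*} (G : SimpleGraph V) : ℕ :=
  sInf {k | 1 ≤ k ∧ ∃ f : Fin k → V → ℕ, IsStrongSepRep G f}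

/- ### Auxiliary lemmas -/

/-- The rotated color `(c + (D - j)) % D` computed explicitly. -/
lemma rho_eq (D j c : ℕ) (hj : j < D) (hc : c < D) :
    (c + (D - j)) % D = if j ≤ c then c - j else c + D - j := by
  rcases le_or_gt j c with h | h
  · have h1 : c + (D - j) = D + (c - j) := by omega
    rw [h1, Nat.add_mod_left, Nat.mod_eq_of_lt (by omega), if_pos h]
  · have h1 : c + (D - j) = c + D - j := by omega
    rw [h1, Nat.mod_eq_of_lt (by omega), if_neg (by omega)]

/-- Core arithmetic fact for the rotation construction: given blocks of size `N`
indexed by colors `< D`, for any vertex-data `(cx, ex)` distinct from both `(cv, ev)`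
and `(cw, ew)` with `cv ≠ cw`, some rotation puts `x` strictly below both `v, w`
or strictly above both. -/
lemma key_arith (D N cv cw cx ev ew ex : ℕ)
    (hcv : cv < D) (hcw : cw < D) (hcx : cx < D)
    (hev : ev < N) (hew : ew < N) (hex : ex < N)
    (hvw : cv ≠ cw) (hxv : cx ≠ cv ∨ ex ≠ ev) (hxw : cx ≠ cw ∨ ex ≠ ew) :
    ∃ j < D,
      (((cx + (D - j)) % D) * N + ex < ((cv + (D - j)) % D) * N + ev ∧
       ((cx + (D - j)) % D) * N + ex < ((cw + (D - j)) % D) * N + ew) ∨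
      (((cv + (D - j)) % D) * N + ev < ((cx + (D - j)) % D) * N + ex ∧
       ((cw + (D - j)) % D) * N + ew < ((cx + (D - j)) % D) * N + ex) := by
  have hD : 0 < D := by omega
  have block : ∀ p q e e' : ℕ, e < N → p < q → p * N + e < q * N + e' := by
    intro p q e e' he hpq
    have : (p + 1) * N ≤ q * N := Nat.mul_le_mul_right N (by omega)
    calc p * N + e < p * N + N := by omega
      _ = (p + 1) * N := by ring
      _ ≤ q * N := this
      _ ≤ q * N + e' := by omega
  -- helper: rotation j = cx puts x in block 0
  by_cases h1 : cx = cv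
  · -- same color as v
    rcases hxv with h | hexv
    · exact absurd h1 h
    by_cases hlt : ex < ev
    · -- rotate block cx to front
      refine ⟨cx, hcx, Or.inl ⟨?_, ?_⟩⟩
      · rw [rho_eq D cx cx hcx hcx, rho_eq D cx cv hcx hcv, if_pos le_rfl, ← h1,
          if_pos le_rfl]
        omega
      · rw [rho_eq D cx cx hcx hcx, rho_eq D cx cw hcx hcw, if_pos le_rfl]
        have hcwx : cw ≠ cx := by omega
        have : (if cx ≤ cw then cw - cx else cw + D - cx) ≥ 1 := by
          split_ifs <;> omega
        have hb := block 0 (if cx ≤ cw then cw - cx else cw + D - cx) ex ew hex (by omega)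
        simpa using hb
    · -- rotate block cx to back: j = (cx+1) % D
      have hlt' : ev < ex := by omega
      set j := (cx + 1) % D with hjdef
      have hj : j < D := Nat.mod_lt _ hD
      have hjval : j = cx + 1 ∨ (cx + 1 = D ∧ j = 0) := by
        rcases Nat.lt_or_ge (cx + 1) D with h | h
        · exact Or.inl (by rw [hjdef, Nat.mod_eq_of_lt h])
        · have : cx + 1 = D := by omega
          exact Or.inr ⟨this, by rw [hjdef, this, Nat.mod_self]⟩
      have hrx : (cx + (D - j)) % D = D - 1 := by
        rw [rho_eq D j cx hj hcx]
        rcases hjval with h | ⟨h, h'⟩ <;> (split_ifs <;> omega)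
      have hrv : (cv + (D - j)) % D = D - 1 := by rw [← h1, hrx]
      have hrw : (cw + (D - j)) % D < D - 1 := by
        rw [rho_eq D j cw hj hcw]
        have : cw ≠ cx := by omega
        rcases hjval with h | ⟨h, h'⟩ <;> (split_ifs <;> omega)
      refine ⟨j, hj, Or.inr ⟨?_, ?_⟩⟩
      · rw [hrx, hrv]; omega
      · rw [hrx]; exact block _ _ ew ex hew hrw
  · by_cases h2 : cx = cw
    · -- same color as w
      rcases hxw with h | hexw
      · exact absurd h2 h
      by_cases hlt : ex < ew
      · refine ⟨cx, hcx, Or.inl ⟨?_, ?_⟩⟩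
        · rw [rho_eq D cx cx hcx hcx, rho_eq D cx cv hcx hcv, if_pos le_rfl]
          have : (if cx ≤ cv then cv - cx else cv + D - cx) ≥ 1 := by
            split_ifs <;> omega
          have hb := block 0 (if cx ≤ cv then cv - cx else cv + D - cx) ex ev hex (by omega)
          simpa using hb
        · rw [rho_eq D cx cx hcx hcx, rho_eq D cx cw hcx hcw, if_pos le_rfl, ← h2,
            if_pos le_rfl]
          omega
      · have hlt' : ew < ex := by omega
        set j := (cx + 1) % D with hjdef
        have hj : j < D := Nat.mod_lt _ hD
        have hjval : j = cx + 1 ∨ (cx + 1 = D ∧ j = 0) := by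
          rcases Nat.lt_or_ge (cx + 1) D with h | h
          · exact Or.inl (by rw [hjdef, Nat.mod_eq_of_lt h])
          · have : cx + 1 = D := by omega
            exact Or.inr ⟨this, by rw [hjdef, this, Nat.mod_self]⟩
        have hrx : (cx + (D - j)) % D = D - 1 := by
          rw [rho_eq D j cx hj hcx]
          rcases hjval with h | ⟨h, h'⟩ <;> (split_ifs <;> omega)
        have hrw2 : (cw + (D - j)) % D = D - 1 := by rw [← h2, hrx]
        have hrv : (cv + (D - j)) % D < D - 1 := by
          rw [rho_eq D j cv hj hcv]
          have : cv ≠ cx := by omega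
          rcases hjval with h | ⟨h, h'⟩ <;> (split_ifs <;> omega)
        refine ⟨j, hj, Or.inr ⟨?_, ?_⟩⟩
        · rw [hrx]; exact block _ _ ev ex hev hrv
        · rw [hrx, hrw2]; omega
    · -- x has its own color: rotate cx to front
      refine ⟨cx, hcx, Or.inl ⟨?_, ?_⟩⟩
      · rw [rho_eq D cx cx hcx hcx, rho_eq D cx cv hcx hcv, if_pos le_rfl]
        have : (if cx ≤ cv then cv - cx else cv + D - cx) ≥ 1 := by
          split_ifs <;> omega
        have hb := block 0 (if cx ≤ cv then cv - cx else cv + D - cx) ex ev hex (by omega)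
        simpa using hb
      · rw [rho_eq D cx cx hcx hcx, rho_eq D cx cw hcx hcw, if_pos le_rfl]
        have : (if cx ≤ cw then cw - cx else cw + D - cx) ≥ 1 := by
          split_ifs <;> omega
        have hb := block 0 (if cx ≤ cw then cw - cx else cw + D - cx) ex ew hex (by omega)
        simpa using hb

/-- Greedy coloring: a graph with all degrees at most `Δ` admits a proper coloring
with colors `< Δ + 1`. -/
lemma exists_greedy_coloring {V : Type*} [Fintype V] (G : SimpleGraph V)
    [DecidableRel G.Adj] (Δ : ℕ) (hdeg : ∀ v, G.degree v ≤ Δ) :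
    ∃ C : V → ℕ, (∀ v, C v < Δ + 1) ∧ ∀ ⦃v w⦄, G.Adj v w → C v ≠ C w := by
  classical
  suffices h : ∀ s : Finset V, ∃ C : V → ℕ, (∀ v ∈ s, C v < Δ + 1) ∧
      ∀ v ∈ s, ∀ w ∈ s, G.Adj v w → C v ≠ C w by
    obtain ⟨C, h1, h2⟩ := h Finset.univ
    exact ⟨C, fun v => h1 v (Finset.mem_univ v),
      fun v w hadj => h2 v (Finset.mem_univ v) w (Finset.mem_univ w) hadj⟩
  intro s
  induction s using Finset.induction_on with
  | empty => exact ⟨fun _ => 0, by simp, by simp⟩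
  | @insert a s ha ih =>
    obtain ⟨C, h1, h2⟩ := ih
    set T := (s.filter (fun w => G.Adj a w)).image C with hT
    have hTcard : T.card < Δ + 1 := by
      have hsub : s.filter (fun w => G.Adj a w) ⊆ G.neighborFinset a := by
        intro w hw
        rw [SimpleGraph.mem_neighborFinset]
        exact (Finset.mem_filter.mp hw).2
      calc T.card ≤ (s.filter (fun w => G.Adj a w)).card := Finset.card_image_le
        _ ≤ (G.neighborFinset a).card := Finset.card_le_card hsub
        _ = G.degree a := (SimpleGraph.card_neighborFinset_eq_degree G a)
        _ ≤ Δ := hdeg a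
        _ < Δ + 1 := by omega
    obtain ⟨c, hcR, hcT⟩ : ∃ c ∈ Finset.range (Δ + 1), c ∉ T := by
      by_contra hcon
      push_neg at hcon
      have hsub : Finset.range (Δ + 1) ⊆ T := fun c hc => hcon c hc
      have := Finset.card_le_card hsub
      rw [Finset.card_range] at this
      omega
    refine ⟨Function.update C a c, ?_, ?_⟩
    · intro v hv
      rcases Finset.mem_insert.mp hv with rfl | hv2
      · rw [Function.update_self]
        exact Finset.mem_range.mp hcR
      · rw [Function.update_of_ne (by rintro rfl; exact ha hv2)]
        exact h1 v hv2
    · intro v hv w hw hadj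
      have hvw : v ≠ w := hadj.ne
      rcases Finset.mem_insert.mp hv with rfl | hv'
      · rcases Finset.mem_insert.mp hw with rfl | hw'
        · exact absurd rfl hvw
        · have hwa : w ≠ v := fun h => ha (h ▸ hw')
          rw [Function.update_self, Function.update_of_ne hwa]
          intro hEq
          exact hcT (hEq ▸ Finset.mem_image_of_mem C (Finset.mem_filter.mpr ⟨hw', hadj⟩))
      · have hva : v ≠ a := fun h => ha (h ▸ hv')
        rcases Finset.mem_insert.mp hw with rfl | hw'
        · rw [Function.update_self, Function.update_of_ne hva]
          intro hEq
          exact hcT (hEq.symm ▸ Finset.mem_image_of_mem C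
            (Finset.mem_filter.mpr ⟨hv', hadj.symm⟩))
        · have hwa : w ≠ a := fun h => ha (h ▸ hw')
          rw [Function.update_of_ne hva, Function.update_of_ne hwa]
          exact h2 v hv' w hw' hadj

/-- Every finite graph has some separating representation. -/
lemma exists_isSepRep {V : Type*} [Fintype V] (G : SimpleGraph V) :
    ∃ k, 1 ≤ k ∧ ∃ f : Fin k → V → ℕ, IsSepRep G f := by
  classical
  set e0 : V → ℕ := fun v => (Fintype.equivFin V v : ℕ) with he0def
  have he0 : Function.Injective e0 := fun a b h =>
    (Fintype.equivFin V).injective (Fin.val_injective h)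
  set F : Option (V × V) → V → ℕ := fun o => match o with
    | none => e0
    | some (a, b) => fun v => if v = a then 0 else if v = b then 1 else e0 v + 2
    with hFdef
  have hFinj : ∀ o, Function.Injective (F o) := by
    rintro (_ | ⟨a, b⟩)
    · exact he0
    · intro u v h
      simp only [F] at h
      by_cases hua : u = a <;> by_cases hva : v = a <;>
        by_cases hub : u = b <;> by_cases hvb : v = b <;>
        simp_all <;> first | omega | (exact he0 (by omega)) | rfl
  refine ⟨Fintype.card (Option (V × V)), ?_, ?_⟩
  · have : 0 < Fintype.card (Option (V × V)) := Fintype.card_pos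
    omega
  · refine ⟨fun i => F ((Fintype.equivFin (Option (V × V))).symm i), ?_, ?_⟩
    · intro i; exact hFinj _
    · intro v w x y hvw hxy hvx hvy hwx hwy
      refine ⟨Fintype.equivFin (Option (V × V)) (some (v, w)), ?_⟩
      simp only [Equiv.symm_apply_apply]
      left
      have hwv : w ≠ v := hvw.ne'
      simp only [F, if_pos rfl, if_neg hwv, if_neg hxy.ne, if_neg hvx.symm,
        if_neg hwx.symm, if_neg hvy.symm, if_neg hwy.symm, if_true]
      omega

/-- Every graph with maximum degree `Δ` has strong separation dimension at most its
separation dimension plus `2Δ + 2`. -/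
theorem strongSepDim_le_sepDim_add {V : Type*} [Fintype V] (G : SimpleGraph V)
    [DecidableRel G.Adj] (Δ : ℕ) (hdeg : ∀ v, G.degree v ≤ Δ) :
    strongSepDim G ≤ sepDim G + 2 * Δ + 2 := by
  classical
  -- the separation set is nonempty, so sepDim is attained
  have hS : {k | 1 ≤ k ∧ ∃ f : Fin k → V → ℕ, IsSepRep G f}.Nonempty := by
    obtain ⟨k, hk, f, hf⟩ := exists_isSepRep G
    exact ⟨k, hk, f, hf⟩
  have hmem : sepDim G ∈ {k | 1 ≤ k ∧ ∃ f : Fin k → V → ℕ, IsSepRep G f} :=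
    Nat.sInf_mem hS
  obtain ⟨hk1, f₀, hf₀⟩ := hmem
  -- coloring setup
  set D := Δ + 1 with hDdef
  set N := Fintype.card V + 1 with hNdef
  obtain ⟨C, hC, hCp⟩ := exists_greedy_coloring G Δ hdeg
  set emb : V → ℕ := fun v => (Fintype.equivFin V v : ℕ) with hembdef
  have hembinj : Function.Injective emb := fun a b h =>
    (Fintype.equivFin V).injective (Fin.val_injective h)
  have hembN : ∀ v, emb v < N := by
    intro v
    have := (Fintype.equivFin V v).isLt
    simp only [hembdef, hNdef]
    omega
  -- the rotation orderings and their reverses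
  set g : Fin D → V → ℕ := fun j v => ((C v + (D - (j : ℕ))) % D) * N + emb v with hgdef
  have hgbound : ∀ j v, g j v < D * N := by
    intro j v
    have h1 : (C v + (D - (j : ℕ))) % D < D := Nat.mod_lt _ (by omega)
    have h2 : emb v < N := hembN v
    calc g j v = ((C v + (D - (j : ℕ))) % D) * N + emb v := rfl
      _ < ((C v + (D - (j : ℕ))) % D) * N + N := by omega
      _ = (((C v + (D - (j : ℕ))) % D) + 1) * N := by ring
      _ ≤ D * N := Nat.mul_le_mul_right N (by omega)
  set r : Fin D → V → ℕ := fun j v => (D * N - 1) - g j v with hrdef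
  have hginj : ∀ j, Function.Injective (g j) := by
    intro j u v h
    apply hembinj
    have hu := hembN u
    have hv := hembN v
    have : g j u % N = g j v % N := by rw [h]
    simp only [hgdef] at this
    rwa [Nat.mul_add_mod' _ _ _ , Nat.mul_add_mod' _ _ _,
      Nat.mod_eq_of_lt hu, Nat.mod_eq_of_lt hv] at this
  have hrinj : ∀ j, Function.Injective (r j) := by
    intro j u v h
    apply hginj j
    have hu := hgbound j u
    have hv := hgbound j v
    simp only [hrdef] at h
    omega
  -- the combined family
  set F : (Fin (sepDim G) ⊕ (Fin D ⊕ Fin D)) → V → ℕ := Sum.elim f₀ (Sum.elim g r) with hFdef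
  set E : (Fin (sepDim G) ⊕ (Fin D ⊕ Fin D)) ≃ Fin (sepDim G + (D + D)) :=
    (Equiv.sumCongr (Equiv.refl (Fin (sepDim G))) finSumFinEquiv).trans finSumFinEquiv with hEdef
  set f : Fin (sepDim G + (D + D)) → V → ℕ := fun i => F (E.symm i) with hfdef
  have hfeq : ∀ s, f (E s) = F s := by
    intro s; simp only [hfdef, Equiv.symm_apply_apply]
  -- key separation property of the rotations
  have key : ∀ v w x : V, C v ≠ C w → x ≠ v → x ≠ w →
      ∃ j : Fin D, (g j x < g j v ∧ g j x < g j w) ∨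
        (g j v < g j x ∧ g j w < g j x) := by
    intro v w x hcvw hxv hxw
    obtain ⟨j, hj, hdisj⟩ := key_arith D N (C v) (C w) (C x) (emb v) (emb w) (emb x)
      (hC v) (hC w) (hC x) (hembN v) (hembN w) (hembN x) hcvw
      (Or.inr (fun h => hxv (hembinj h)))
      (Or.inr (fun h => hxw (hembinj h)))
    exact ⟨⟨j, hj⟩, hdisj⟩
  -- membership of k + (D + D) in the strong set
  have hstrong : strongSepDim G ≤ sepDim G + (D + D) := by
    apply Nat.sInf_le
    refine ⟨by omega, f, ⟨⟨?_, ?_⟩, ?_⟩⟩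
    · intro i
      have : ∀ s, Function.Injective (F s) := by
        rintro (i | j | j)
        · exact hf₀.1 i
        · exact hginj j
        · exact hrinj j
      exact this _
    · intro v w x y hvw hxy hvx hvy hwx hwy
      obtain ⟨i, hi⟩ := hf₀.2 hvw hxy hvx hvy hwx hwy
      refine ⟨E (Sum.inl i), ?_⟩
      rw [show f (E (Sum.inl i)) = F (Sum.inl i) from hfeq _]
      exact hi
    · intro v w x hvw hxv hxw
      obtain ⟨j, hdisj⟩ := key v w x (hCp hvw) hxv hxw
      have hb := hgbound j v
      have hb' := hgbound j w
      have hb'' := hgbound j x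
      rcases hdisj with ⟨h1, h2⟩ | ⟨h1, h2⟩
      · refine ⟨⟨E (Sum.inr (Sum.inl j)), ?_⟩, ⟨E (Sum.inr (Sum.inr j)), ?_⟩⟩
        · rw [hfeq]; exact ⟨h1, h2⟩
        · rw [hfeq]
          simp only [hFdef, Sum.elim_inr, hrdef]
          omega
      · refine ⟨⟨E (Sum.inr (Sum.inr j)), ?_⟩, ⟨E (Sum.inr (Sum.inl j)), ?_⟩⟩
        · rw [hfeq]
          simp only [hFdef, Sum.elim_inr, hrdef]
          omega
        · rw [hfeq]; exact ⟨h1, h2⟩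
  omega
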